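/- Let k be a field, n ≥ 2, λ₁,…,λₙ pairwise distinct nonzero elements of k, X = (k^n, k^n; id, diag(λᵢ), cyclic shift) and Y = (k, k; 1, 0, 0). Let M be a representation of the 3-Kronecker quiver fitting in an exact sequence 0 → X^a → M → Y^b → 0 such that Y is not isomorphic to a subrepresentation of M. Then every subrepresentation U of M with dimension vector (n+1, n+1) is indecomposable and fits in an exact sequence 0 → X → U → Y → 0. -/

import Mathlib

/- Condition (C), Case 2: for X = (k^n,k^n; id, diag(λᵢ), shift), Y = (k,k;1,0,0),
   if M fits in an exact sequence 0 → X^a → M → Y^b → 0 and Y does not embed in M,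
   then every subrepresentation U ≤ M of dimension vector (n+1,n+1) is indecomposable
   and fits in an exact sequence 0 → X → U → Y → 0. -/

/-- A representation of the 3-Kronecker quiver. -/
structure Rep3 (k : Type) [Field k] where
  V1 : Type
  V2 : Type
  [grp1 : AddCommGroup V1]
  [grp2 : AddCommGroup V2]
  [mod1 : Module k V1]
  [mod2 : Module k V2]
  a : V1 →ₗ[k] V2
  b : V1 →ₗ[k] V2
  c : V1 →ₗ[k] V2

attribute [instance] Rep3.grp1 Rep3.grp2 Rep3.mod1 Rep3.mod2

/-- Morphisms of 3-Kronecker representations. -/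
def IsHom3 (k : Type) [Field k] (R S : Rep3 k)
    (f₁ : R.V1 →ₗ[k] S.V1) (f₂ : R.V2 →ₗ[k] S.V2) : Prop :=
  f₂.comp R.a = S.a.comp f₁ ∧ f₂.comp R.b = S.b.comp f₁ ∧ f₂.comp R.c = S.c.comp f₁

def kroneckerBeta (k : Type) [Field k] (n : ℕ) (l : Fin n → k) :
    (Fin n → k) →ₗ[k] (Fin n → k) where
  toFun v i := l i * v i
  map_add' u v := by funext i; simp [mul_add]
  map_smul' c v := by funext i; simp; ring

def kroneckerGamma (k : Type) [Field k] (n : ℕ) :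
    (Fin n → k) →ₗ[k] (Fin n → k) where
  toFun v i := v ((finRotate n).symm i)
  map_add' u v := rfl
  map_smul' c v := rfl

/-- The representation X = (k^n, k^n; id, diag(λᵢ), cyclic shift). -/
def repX (k : Type) [Field k] (n : ℕ) (l : Fin n → k) : Rep3 k where
  V1 := Fin n → k
  V2 := Fin n → k
  a := LinearMap.id
  b := kroneckerBeta k n l
  c := kroneckerGamma k n

/-- The representation Y = (k, k; 1, 0, 0). -/
def repY (k : Type) [Field k] : Rep3 k where
  V1 := k
  V2 := k
  a := LinearMap.id
  b := 0
  c := 0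

/-- The direct sum of m copies of a representation. -/
def pow3 (k : Type) [Field k] (R : Rep3 k) (m : ℕ) : Rep3 k where
  V1 := Fin m → R.V1
  V2 := Fin m → R.V2
  a := LinearMap.pi fun j => R.a.comp (LinearMap.proj j)
  b := LinearMap.pi fun j => R.b.comp (LinearMap.proj j)
  c := LinearMap.pi fun j => R.c.comp (LinearMap.proj j)

open Fin.NatCast in
lemma finRotate_iterate_zero (n m : ℕ) : ((finRotate (n+1))^[m]) 0 = (m : Fin (n+1)) := by
  induction m with
  | zero => simp
  | succ m ih =>
    rw [Function.iterate_succ_apply', ih, finRotate_succ_apply]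
    push_cast; ring

open Fin.NatCast in
lemma finRotate_iterate_self (n : ℕ) (j : Fin (n+1)) : ((finRotate (n+1))^[n+1]) j = j := by
  have key : ∀ m : ℕ, ((finRotate (n+1))^[m]) j = j + (m : Fin (n+1)) := by
    intro m; induction m with
    | zero => simp
    | succ m ih => rw [Function.iterate_succ_apply', ih, finRotate_succ_apply]; push_cast; rw [add_assoc]
  rw [key (n+1)]
  simp

lemma finRotate_symm_iterate_self (n : ℕ) (j : Fin (n+1)) :
    (((finRotate (n+1)).symm)^[n+1]) j = j := by
  have h1 : Function.LeftInverse (finRotate (n+1)) (finRotate (n+1)).symm :=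
    (finRotate (n+1)).apply_symm_apply
  have h2 := h1.iterate (n+1) j
  rwa [finRotate_iterate_self] at h2

lemma const_of_finRotate {α : Type*} (n : ℕ) (g : Fin (n+1) → α)
    (h : ∀ i, g (finRotate (n+1) i) = g i) (i : Fin (n+1)) : g i = g 0 := by
  have key : ∀ m : ℕ, g (((finRotate (n+1))^[m]) 0) = g 0 := by
    intro m; induction m with
    | zero => rfl
    | succ m ih => rw [Function.iterate_succ_apply', h]; exact ih
  have h2 := key i.val
  rwa [finRotate_iterate_zero, Fin.cast_val_eq_self] at h2

/-- coordinate projection onto the i-th coordinate (in each copy). -/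
def coordProj (k : Type) [Field k] (a n : ℕ) (i : Fin n) :
    (Fin a → Fin n → k) →ₗ[k] (Fin a → Fin n → k) where
  toFun v := fun m j => if j = i then v m j else 0
  map_add' u v := by funext m j; by_cases h : j = i <;> simp [h]
  map_smul' c v := by funext m j; by_cases h : j = i <;> simp [h]

lemma invariant_structure (k : Type) [Field k] (N a : ℕ) (hN : 1 ≤ N) (l : Fin (N+1) → k)
    (hinj : Function.Injective l)
    (V' : Submodule k (Fin a → Fin (N+1) → k))
    (hbV : ∀ v ∈ V', (kroneckerBeta k (N+1) l).compLeft (Fin a) v ∈ V')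
    (hcV : ∀ v ∈ V', (kroneckerGamma k (N+1)).compLeft (Fin a) v ∈ V')
    (hw1 : Module.finrank k V' ≤ N + 2)
    (hw2 : N + 2 ≤ 2 * Module.finrank k V') :
    Module.finrank k ↥V' = N + 1 ∧
    ∃ v : Fin (N+1) → (Fin a → Fin (N+1) → k),
      (∀ i, v i ∈ V') ∧
      (∀ i, (kroneckerBeta k (N+1) l).compLeft (Fin a) (v i) = l i • v i) ∧
      (∀ i, (kroneckerGamma k (N+1)).compLeft (Fin a) (v i) = v (finRotate (N+1) i)) ∧
      (∀ e : Fin (N+1) → k, ∑ i, e i • v i = 0 → e = 0) ∧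
      (∀ u ∈ V', ∃ e : Fin (N+1) → k, ∑ i, e i • v i = u) := by
  classical
  set Bg : Module.End k (Fin a → Fin (N+1) → k) :=
    (kroneckerBeta k (N+1) l).compLeft (Fin a) with hBgdef
  set Cg : Module.End k (Fin a → Fin (N+1) → k) :=
    (kroneckerGamma k (N+1)).compLeft (Fin a) with hCgdef
  have hBg_apply : ∀ (v : Fin a → Fin (N+1) → k) m j, Bg v m j = l j * v m j := fun _ _ _ => rfl
  have hCg_apply : ∀ (v : Fin a → Fin (N+1) → k) m j,
      Cg v m j = v m ((finRotate (N+1)).symm j) := fun _ _ _ => rfl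
  set P : Fin (N+1) → Module.End k (Fin a → Fin (N+1) → k) := fun i => coordProj k a (N+1) i
    with hPdef
  have hP_apply : ∀ i (v : Fin a → Fin (N+1) → k) m j,
      P i v m j = if j = i then v m j else 0 := fun _ _ _ _ => rfl
  -- multiplying by the polynomial factors preserves V'
  have hprod_inv : ∀ (s : Finset (Fin (N+1))), ∀ v ∈ V',
      (fun m j => (∏ t ∈ s, (l j - l t)) * v m j) ∈ V' := by
    intro s
    induction s using Finset.induction_on with
    | empty => intro v hv; simpa using hv
    | @insert t s hts ih =>
      intro v hv
      have hw := ih v hv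
      have heq : (fun m j => (∏ x ∈ insert t s, (l j - l x)) * v m j)
          = Bg (fun m j => (∏ x ∈ s, (l j - l x)) * v m j)
            - l t • (fun m j => (∏ x ∈ s, (l j - l x)) * v m j) := by
        funext m j
        rw [Finset.prod_insert hts]
        have h1 : (Bg (fun m j => (∏ x ∈ s, (l j - l x)) * v m j)
            - l t • (fun m j => (∏ x ∈ s, (l j - l x)) * v m j)) m j
            = l j * ((∏ x ∈ s, (l j - l x)) * v m j)
              - l t * ((∏ x ∈ s, (l j - l x)) * v m j) := by
          simp [hBg_apply]
        rw [h1]; ring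
      rw [heq]
      exact Submodule.sub_mem _ (hbV _ hw) (Submodule.smul_mem _ _ hw)
  -- the coordinate projections preserve V'
  have hP_inv : ∀ i, ∀ v ∈ V', P i v ∈ V' := by
    intro i v hv
    have hc0 : (∏ t ∈ Finset.univ.erase i, (l i - l t)) ≠ 0 := by
      refine Finset.prod_ne_zero_iff.mpr ?_
      intro t ht
      have hne : t ≠ i := (Finset.mem_erase.mp ht).1
      exact sub_ne_zero.mpr fun h => hne (hinj h).symm
    have key : P i v = (∏ t ∈ Finset.univ.erase i, (l i - l t))⁻¹ •
        (fun m j => (∏ t ∈ Finset.univ.erase i, (l j - l t)) * v m j) := by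
      funext m j
      have h2 : ((∏ t ∈ Finset.univ.erase i, (l i - l t))⁻¹ •
          (fun m j => (∏ t ∈ Finset.univ.erase i, (l j - l t)) * v m j)) m j
          = (∏ t ∈ Finset.univ.erase i, (l i - l t))⁻¹ *
            ((∏ t ∈ Finset.univ.erase i, (l j - l t)) * v m j) := rfl
      rw [h2, hP_apply]
      by_cases h : j = i
      · subst h
        rw [if_pos rfl, ← mul_assoc, inv_mul_cancel₀ hc0, one_mul]
      · rw [if_neg h]
        have h3 : (∏ t ∈ Finset.univ.erase i, (l j - l t)) = 0 :=
          Finset.prod_eq_zero (Finset.mem_erase.mpr ⟨h, Finset.mem_univ j⟩) (sub_self (l j))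
        rw [h3, zero_mul, mul_zero]
    rw [key]
    exact Submodule.smul_mem _ _ (hprod_inv _ v hv)
  -- decomposition of any vector into coordinate pieces
  have hdecomp : ∀ v : Fin a → Fin (N+1) → k, ∑ i, P i v = v := by
    intro v; funext m j
    have h1 : (∑ i, P i v) m j = ∑ i, P i v m j := by
      rw [Finset.sum_apply, Finset.sum_apply]
    rw [h1]
    simp [hP_apply]
  -- the coordinate pieces of V'
  set S : Fin (N+1) → Submodule k (Fin a → Fin (N+1) → k) :=
    fun i => Submodule.map (P i) V' with hSdef
  have hS_le : ∀ i, S i ≤ V' := by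
    rintro i x ⟨v, hv, rfl⟩
    exact hP_inv i v hv
  have hS_supp : ∀ i, ∀ x ∈ S i, ∀ m j, j ≠ i → x m j = 0 := by
    rintro i x ⟨v, hv, rfl⟩ m j hj
    rw [hP_apply, if_neg hj]
  have hP_of_supp : ∀ i (x : Fin a → Fin (N+1) → k), (∀ m j, j ≠ i → x m j = 0) →
      P i x = x := by
    intro i x hx
    funext m j
    rw [hP_apply]
    by_cases h : j = i
    · rw [if_pos h]
    · rw [if_neg h, hx m j h]
  have hP_S_other : ∀ i i', i ≠ i' → ∀ x ∈ S i', P i x = 0 := by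
    intro i i' hii x hx
    funext m j
    rw [hP_apply]
    by_cases h : j = i
    · rw [if_pos h]; exact hS_supp i' x hx m j (h ▸ hii)
    · rw [if_neg h]; rfl
  -- direct sum decomposition: V' ≃ Π i, S i
  have hmemsum : ∀ (s : ∀ i, ↥(S i)), (∑ i, (s i : Fin a → Fin (N+1) → k)) ∈ V' :=
    fun s => Submodule.sum_mem _ fun i _ => hS_le i (s i).2
  set Φ : (∀ i, ↥(S i)) →ₗ[k] ↥V' :=
    LinearMap.codRestrict V' (∑ i, (S i).subtype.comp (LinearMap.proj i))
      (fun s => by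
        have h1 : (∑ i, (S i).subtype.comp (LinearMap.proj i)) s
            = ∑ i, (s i : Fin a → Fin (N+1) → k) := by
          rw [LinearMap.sum_apply]; rfl
        rw [h1]; exact hmemsum s) with hΦdef
  have hΦ_apply : ∀ (s : ∀ i, ↥(S i)),
      (Φ s : Fin a → Fin (N+1) → k) = ∑ i, (s i : Fin a → Fin (N+1) → k) := by
    intro s
    have h1 : (Φ s : Fin a → Fin (N+1) → k)
        = (∑ i, (S i).subtype.comp (LinearMap.proj i)) s := rfl
    rw [h1, LinearMap.sum_apply]; rfl
  have hΦinj : Function.Injective Φ := by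
    rw [← LinearMap.ker_eq_bot, LinearMap.ker_eq_bot']
    intro s hs
    have h0 : (∑ i, (s i : Fin a → Fin (N+1) → k)) = 0 := by
      rw [← hΦ_apply s, hs]; rfl
    funext i
    have h1 : P i (∑ i', (s i' : Fin a → Fin (N+1) → k)) = (s i : Fin a → Fin (N+1) → k) := by
      rw [map_sum]
      rw [Finset.sum_eq_single i]
      · exact hP_of_supp i _ (hS_supp i _ (s i).2)
      · intro i' _ hii'
        exact hP_S_other i i' (Ne.symm hii') _ (s i').2
      · intro h; exact absurd (Finset.mem_univ i) h
    have h2 : (s i : Fin a → Fin (N+1) → k) = 0 := by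
      rw [← h1, h0, map_zero]
    exact Subtype.ext h2
  have hΦsurj : Function.Surjective Φ := by
    rintro ⟨u, hu⟩
    refine ⟨fun i => ⟨P i u, ⟨u, hu, rfl⟩⟩, ?_⟩
    apply Subtype.ext
    rw [hΦ_apply]
    exact hdecomp u
  have hrank_sum : Module.finrank k ↥V' = ∑ i, Module.finrank k ↥(S i) := by
    rw [← Module.finrank_pi_fintype k (M := fun i => ↥(S i))]
    exact (LinearEquiv.ofBijective Φ ⟨hΦinj, hΦsurj⟩).symm.finrank_eq
  -- Cg maps S i into S (finRotate i)
  have hCgP : ∀ i (v : Fin a → Fin (N+1) → k),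
      Cg (P i v) = P (finRotate (N+1) i) (Cg v) := by
    intro i v
    funext m j
    rw [hCg_apply, hP_apply, hP_apply, hCg_apply]
    by_cases h : j = finRotate (N+1) i
    · rw [if_pos h, if_pos (by rw [h, Equiv.symm_apply_apply])]
    · rw [if_neg h, if_neg (fun hc => h (by rw [← hc, Equiv.apply_symm_apply]))]
  have hCgS : ∀ i, Submodule.map Cg (S i) ≤ S (finRotate (N+1) i) := by
    rintro i x ⟨y, ⟨v, hv, rfl⟩, rfl⟩
    exact ⟨Cg v, hcV v hv, (hCgP i v).symm⟩
  have hCg_inj : Function.Injective Cg := by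
    intro u w huw
    funext m j
    have h1 := congrFun (congrFun huw m) (finRotate (N+1) j)
    rw [hCg_apply, hCg_apply, Equiv.symm_apply_apply] at h1
    exact h1
  have hg_le : ∀ i, Module.finrank k ↥(S i) ≤ Module.finrank k ↥(S (finRotate (N+1) i)) := by
    intro i
    calc Module.finrank k ↥(S i)
        = Module.finrank k ↥(Submodule.map Cg (S i)) :=
          (Submodule.equivMapOfInjective Cg hCg_inj (S i)).finrank_eq
      _ ≤ Module.finrank k ↥(S (finRotate (N+1) i)) := Submodule.finrank_mono (hCgS i)
  have hg_eq : ∀ i, Module.finrank k ↥(S (finRotate (N+1) i)) = Module.finrank k ↥(S i) := by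
    have hsum : ∑ i, Module.finrank k ↥(S i)
        = ∑ i, Module.finrank k ↥(S (finRotate (N+1) i)) :=
      (Equiv.sum_comp (finRotate (N+1)) (fun i => Module.finrank k ↥(S i))).symm
    intro i
    exact ((Finset.sum_eq_sum_iff_of_le (fun i _ => hg_le i)).mp hsum i (Finset.mem_univ i)).symm
  have hg_const : ∀ i, Module.finrank k ↥(S i) = Module.finrank k ↥(S 0) :=
    const_of_finRotate N _ hg_eq
  -- conclude each piece has dimension 1
  have hrank_eq : Module.finrank k ↥V' = (N+1) * Module.finrank k ↥(S 0) := by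
    rw [hrank_sum, Finset.sum_congr rfl (fun i _ => hg_const i), Finset.sum_const,
      Finset.card_univ, Fintype.card_fin, smul_eq_mul]
  have hS0 : Module.finrank k ↥(S 0) = 1 := by
    have h1 : (N+1) * Module.finrank k ↥(S 0) ≤ N + 2 := hrank_eq ▸ hw1
    have h2 : N + 2 ≤ 2 * ((N+1) * Module.finrank k ↥(S 0)) := hrank_eq ▸ hw2
    set d := Module.finrank k ↥(S 0) with hd
    have h0 : d ≠ 0 := by
      rintro h0
      rw [h0, mul_zero, mul_zero] at h2
      omega
    have h3 : d < 2 := by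
      by_contra hcon
      push_neg at hcon
      have h4 := Nat.mul_le_mul (Nat.le_refl (N+1)) hcon
      omega
    omega
  have hrankV : Module.finrank k ↥V' = N + 1 := by rw [hrank_eq, hS0, mul_one]
  refine ⟨hrankV, ?_⟩
  -- choose a nonzero vector in S 0 and rotate it around
  have hS0ne : S 0 ≠ ⊥ := by
    intro h
    rw [h, finrank_bot] at hS0
    omega
  obtain ⟨v₀, hv₀S, hv₀ne⟩ := (Submodule.ne_bot_iff _).mp hS0ne
  set v : Fin (N+1) → (Fin a → Fin (N+1) → k) := fun i => (Cg ^ (i : ℕ)) v₀ with hvdef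
  have hCg_pow : ∀ (s : ℕ) (u : Fin a → Fin (N+1) → k) m j,
      (Cg ^ s) u m j = u m (((finRotate (N+1)).symm)^[s] j) := by
    intro s
    induction s with
    | zero => intro u m j; rfl
    | succ s ih =>
      intro u m j
      rw [pow_succ, Module.End.mul_apply, ih (Cg u) m j, hCg_apply,
        Function.iterate_succ_apply' ((finRotate (N+1)).symm) s j]
  have hCg_pow_period : ∀ (u : Fin a → Fin (N+1) → k), (Cg ^ (N+1)) u = u := by
    intro u; funext m j
    rw [hCg_pow, finRotate_symm_iterate_self]
  have hperiod_mul : ∀ (q : ℕ) (u : Fin a → Fin (N+1) → k), (Cg ^ ((N+1) * q)) u = u := by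
    intro q
    induction q with
    | zero => intro u; rfl
    | succ q ih =>
      intro u
      rw [Nat.mul_succ, pow_add, Module.End.mul_apply, hCg_pow_period, ih]
  have hv_mod : ∀ s : ℕ, (Cg ^ s) v₀ = (Cg ^ (s % (N+1))) v₀ := by
    intro s
    conv_lhs => rw [← Nat.div_add_mod s (N+1)]
    rw [pow_add, Module.End.mul_apply, hperiod_mul]
  have hv_mem_S_nat : ∀ s : ℕ, (Cg ^ s) v₀ ∈ S (((finRotate (N+1))^[s]) 0) := by
    intro s
    induction s with
    | zero => exact hv₀S
    | succ s ih =>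
      rw [pow_succ', Module.End.mul_apply, Function.iterate_succ_apply']
      exact hCgS _ ⟨_, ih, rfl⟩
  have hv_mem_S : ∀ i, v i ∈ S i := by
    intro i
    have h1 := hv_mem_S_nat i.val
    rwa [finRotate_iterate_zero, Fin.cast_val_eq_self] at h1
  have hv_mem : ∀ i, v i ∈ V' := fun i => hS_le i (hv_mem_S i)
  have hv_ne : ∀ i, v i ≠ 0 := by
    intro i h
    apply hv₀ne
    funext m j
    have hLI : Function.LeftInverse (finRotate (N+1)).symm (finRotate (N+1)) :=
      (finRotate (N+1)).symm_apply_apply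
    have h1 : v i m ((finRotate (N+1))^[i.val] j)
        = v₀ m (((finRotate (N+1)).symm)^[i.val] ((finRotate (N+1))^[i.val] j)) :=
      hCg_pow i.val v₀ m _
    rw [hLI.iterate i.val j, h] at h1
    exact h1.symm
  have hv_beta : ∀ i, Bg (v i) = l i • v i := by
    intro i
    funext m j
    rw [hBg_apply]
    have h2 : (l i • v i) m j = l i * v i m j := rfl
    rw [h2]
    by_cases h : j = i
    · rw [h]
    · rw [hS_supp i (v i) (hv_mem_S i) m j h, mul_zero, mul_zero]
  have hv_gamma : ∀ i, Cg (v i) = v (finRotate (N+1) i) := by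
    intro i
    have h1 : Cg (v i) = (Cg ^ (i.val + 1)) v₀ := by
      rw [pow_succ', Module.End.mul_apply]
    have hone : (1 : Fin (N+1)).val = 1 := by
      have hlt : (1:ℕ) < N + 1 := by omega
      rw [Fin.val_one', Nat.mod_eq_of_lt hlt]
    have hval : (finRotate (N+1) i).val = (i.val + 1) % (N+1) := by
      rw [finRotate_succ_apply, Fin.val_add, hone]
    have h2 : v (finRotate (N+1) i) = (Cg ^ ((i.val + 1) % (N+1))) v₀ := by
      show (Cg ^ ((finRotate (N+1) i).val)) v₀ = _
      rw [hval]
    rw [h1, hv_mod (i.val + 1), h2]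
  have hv_indep : ∀ e : Fin (N+1) → k, ∑ i, e i • v i = 0 → e = 0 := by
    intro e he
    funext i₀
    obtain ⟨m, j, hmj⟩ : ∃ m j, v i₀ m j ≠ 0 := by
      by_contra hcon
      push_neg at hcon
      exact hv_ne i₀ (funext fun m => funext fun j => hcon m j)
    have hji : j = i₀ := by
      by_contra hji
      exact hmj (hS_supp i₀ (v i₀) (hv_mem_S i₀) m j hji)
    subst hji
    have h1 : (∑ i, e i • v i) m j = ∑ i, e i * v i m j := by
      rw [Finset.sum_apply, Finset.sum_apply]
      rfl
    have h2 : ∑ i, e i * v i m j = e j * v j m j := by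
      rw [Finset.sum_eq_single j]
      · intro i _ hij
        rw [hS_supp i (v i) (hv_mem_S i) m j fun h => hij h.symm, mul_zero]
      · intro h; exact absurd (Finset.mem_univ j) h
    have h3 : e j * v j m j = 0 := by
      rw [← h2, ← h1, he]
      rfl
    exact (mul_eq_zero.mp h3).resolve_right hmj
  have hli : LinearIndependent k v := Fintype.linearIndependent_iff.mpr
    (fun g hg i => congrFun (hv_indep g hg) i)
  have hspan : Submodule.span k (Set.range v) = V' := by
    have hle : Submodule.span k (Set.range v) ≤ V' := by
      rw [Submodule.span_le]
      rintro x ⟨i, rfl⟩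
      exact hv_mem i
    refine Submodule.eq_of_le_of_finrank_le hle ?_
    rw [hrankV, finrank_span_eq_card hli, Fintype.card_fin]
  refine ⟨v, hv_mem, hv_beta, hv_gamma, hv_indep, ?_⟩
  intro u hu
  have h4 : u ∈ Submodule.span k (Set.range v) := hspan ▸ hu
  rw [Submodule.mem_span_range_iff_exists_fun] at h4
  exact h4

lemma pow3X_a_apply (k : Type) [Field k] (n aa : ℕ) (l : Fin n → k) (u : Fin aa → Fin n → k) :
    (pow3 k (repX k n l) aa).a u = u := rfl

lemma pow3X_b_apply (k : Type) [Field k] (n aa : ℕ) (l : Fin n → k) (u : Fin aa → Fin n → k) :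
    (pow3 k (repX k n l) aa).b u = (kroneckerBeta k n l).compLeft (Fin aa) u := rfl

lemma pow3X_c_apply (k : Type) [Field k] (n aa : ℕ) (l : Fin n → k) (u : Fin aa → Fin n → k) :
    (pow3 k (repX k n l) aa).c u = (kroneckerGamma k n).compLeft (Fin aa) u := rfl

lemma pow3Y_a_apply (k : Type) [Field k] (bb : ℕ) (u : Fin bb → k) :
    (pow3 k (repY k) bb).a u = u := rfl

lemma pow3Y_b_apply (k : Type) [Field k] (bb : ℕ) (u : Fin bb → k) :
    (pow3 k (repY k) bb).b u = 0 := rfl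

lemma pow3Y_c_apply (k : Type) [Field k] (bb : ℕ) (u : Fin bb → k) :
    (pow3 k (repY k) bb).c u = 0 := rfl

lemma toSpanSingleton_inj {k : Type} [Field k] {V : Type} [AddCommGroup V] [Module k V]
    {v : V} (hv : v ≠ 0) : Function.Injective (LinearMap.toSpanSingleton k V v) := by
  intro s t h
  rw [LinearMap.toSpanSingleton_apply, LinearMap.toSpanSingleton_apply] at h
  have h2 : (s - t) • v = 0 := by rw [sub_smul, h, sub_self]
  rcases smul_eq_zero.mp h2 with h3 | h3
  · exact sub_eq_zero.mp h3
  · exact absurd h3 hv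

set_option maxHeartbeats 1000000

theorem stmt9 (k : Type) [Field k] (n : ℕ) (hn : 2 ≤ n) (l : Fin n → k)
    (hne : ∀ i, l i ≠ 0) (hinj : Function.Injective l)
    (M : Rep3 k) [FiniteDimensional k M.V1] [FiniteDimensional k M.V2]
    (a b : ℕ)
    (ι₁ : (pow3 k (repX k n l) a).V1 →ₗ[k] M.V1)
    (ι₂ : (pow3 k (repX k n l) a).V2 →ₗ[k] M.V2)
    (hι : IsHom3 k (pow3 k (repX k n l) a) M ι₁ ι₂)
    (hι1 : Function.Injective ι₁) (hι2 : Function.Injective ι₂)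
    (π₁ : M.V1 →ₗ[k] (pow3 k (repY k) b).V1)
    (π₂ : M.V2 →ₗ[k] (pow3 k (repY k) b).V2)
    (hπ : IsHom3 k M (pow3 k (repY k) b) π₁ π₂)
    (hπ1 : Function.Surjective π₁) (hπ2 : Function.Surjective π₂)
    (hexact1 : LinearMap.ker π₁ = LinearMap.range ι₁)
    (hexact2 : LinearMap.ker π₂ = LinearMap.range ι₂)
    -- M is E-reduced: Y is not (isomorphic to) a subrepresentation of M
    (hred : ¬ ∃ (g₁ : (repY k).V1 →ₗ[k] M.V1) (g₂ : (repY k).V2 →ₗ[k] M.V2),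
      IsHom3 k (repY k) M g₁ g₂ ∧ Function.Injective g₁ ∧ Function.Injective g₂)
    -- U is a subrepresentation of M of dimension vector (n+1, n+1)
    (U₁ : Submodule k M.V1) (U₂ : Submodule k M.V2)
    (hUa : ∀ x ∈ U₁, M.a x ∈ U₂) (hUb : ∀ x ∈ U₁, M.b x ∈ U₂)
    (hUc : ∀ x ∈ U₁, M.c x ∈ U₂)
    (hd1 : Module.finrank k U₁ = n + 1) (hd2 : Module.finrank k U₂ = n + 1) :
    -- U is indecomposable: every idempotent endomorphism of U is 0 or the identity
    (∀ (e₁ : U₁ →ₗ[k] U₁) (e₂ : U₂ →ₗ[k] U₂),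
      e₂.comp (M.a.restrict hUa) = (M.a.restrict hUa).comp e₁ →
      e₂.comp (M.b.restrict hUb) = (M.b.restrict hUb).comp e₁ →
      e₂.comp (M.c.restrict hUc) = (M.c.restrict hUc).comp e₁ →
      e₁.comp e₁ = e₁ → e₂.comp e₂ = e₂ →
      (e₁ = 0 ∧ e₂ = 0) ∨ (e₁ = LinearMap.id ∧ e₂ = LinearMap.id)) ∧
    -- U fits in an exact sequence 0 → X → U → Y → 0
    (∃ (j₁ : (repX k n l).V1 →ₗ[k] U₁) (j₂ : (repX k n l).V2 →ₗ[k] U₂)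
       (q₁ : U₁ →ₗ[k] (repY k).V1) (q₂ : U₂ →ₗ[k] (repY k).V2),
      j₂.comp (repX k n l).a = (M.a.restrict hUa).comp j₁ ∧
      j₂.comp (repX k n l).b = (M.b.restrict hUb).comp j₁ ∧
      j₂.comp (repX k n l).c = (M.c.restrict hUc).comp j₁ ∧
      q₂.comp (M.a.restrict hUa) = (repY k).a.comp q₁ ∧
      q₂.comp (M.b.restrict hUb) = (repY k).b.comp q₁ ∧
      q₂.comp (M.c.restrict hUc) = (repY k).c.comp q₁ ∧
      Function.Injective j₁ ∧ Function.Injective j₂ ∧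
      Function.Surjective q₁ ∧ Function.Surjective q₂ ∧
      LinearMap.ker q₁ = LinearMap.range j₁ ∧
      LinearMap.ker q₂ = LinearMap.range j₂) := by
  classical
  obtain ⟨N, rfl⟩ : ∃ m, n = m + 1 := ⟨n - 1, by omega⟩
  have hN : 1 ≤ N := by omega
  -- basic consequences of the exact sequence
  have hπa : ∀ x : M.V1, π₂ (M.a x) = π₁ x := by
    intro x
    have h := LinearMap.congr_fun hπ.1 x
    rwa [LinearMap.comp_apply, LinearMap.comp_apply] at h
  have hπb : ∀ x : M.V1, π₂ (M.b x) = 0 := by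
    intro x
    have h := LinearMap.congr_fun hπ.2.1 x
    rw [LinearMap.comp_apply, LinearMap.comp_apply] at h
    exact h
  have hπc : ∀ x : M.V1, π₂ (M.c x) = 0 := by
    intro x
    have h := LinearMap.congr_fun hπ.2.2 x
    rw [LinearMap.comp_apply, LinearMap.comp_apply] at h
    exact h
  have hιa : ∀ u : Fin a → Fin (N+1) → k, M.a (ι₁ u) = ι₂ u := by
    intro u
    have h := LinearMap.congr_fun hι.1 u
    exact h.symm
  have hιb : ∀ u : Fin a → Fin (N+1) → k,
      M.b (ι₁ u) = ι₂ ((kroneckerBeta k (N+1) l).compLeft (Fin a) u) := by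
    intro u
    have h := LinearMap.congr_fun hι.2.1 u
    exact h.symm
  have hιc : ∀ u : Fin a → Fin (N+1) → k,
      M.c (ι₁ u) = ι₂ ((kroneckerGamma k (N+1)).compLeft (Fin a) u) := by
    intro u
    have h := LinearMap.congr_fun hι.2.2 u
    exact h.symm
  -- M.a is injective
  have hMa_ker : ∀ x : M.V1, M.a x = 0 → x = 0 := by
    intro x hx
    have h1 : π₁ x = 0 := by rw [← hπa x, hx, map_zero]; rfl
    have h2 : x ∈ LinearMap.ker π₁ := h1
    rw [hexact1] at h2
    obtain ⟨u, rfl⟩ := h2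
    have h3 : M.a (ι₁ u) = ι₂ u := hιa u
    rw [hx] at h3
    have h4 : u = 0 := hι2 (by rw [← h3]; exact (map_zero ι₂).symm)
    rw [h4, map_zero]
  have hMa_inj : Function.Injective M.a := by
    intro x y hxy
    have h := hMa_ker (x - y) (by rw [map_sub, hxy, sub_self])
    exact sub_eq_zero.mp h
  -- reformulation of E-reducedness
  have hbc : ∀ v : M.V1, M.b v = 0 → M.c v = 0 → v = 0 := by
    intro v hb0 hc0
    by_contra hv
    apply hred
    refine ⟨LinearMap.toSpanSingleton k M.V1 v, LinearMap.toSpanSingleton k M.V2 (M.a v),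
      ⟨?_, ?_, ?_⟩, ?_, ?_⟩
    · apply LinearMap.ext; intro t
      show (@id k t) • M.a v = M.a ((@id k t) • v)
      rw [map_smul]
    · apply LinearMap.ext; intro t
      show (LinearMap.toSpanSingleton k M.V2 (M.a v)) ((0 : k →ₗ[k] k) t) = M.b ((@id k t) • v)
      rw [map_smul, hb0, smul_zero]
      show (0:k) • M.a v = 0
      rw [zero_smul]
    · apply LinearMap.ext; intro t
      show (LinearMap.toSpanSingleton k M.V2 (M.a v)) ((0 : k →ₗ[k] k) t) = M.c ((@id k t) • v)
      rw [map_smul, hc0, smul_zero]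
      show (0:k) • M.a v = 0
      rw [zero_smul]
    · show Function.Injective (LinearMap.toSpanSingleton k M.V1 v)
      exact toSpanSingleton_inj hv
    · show Function.Injective (LinearMap.toSpanSingleton k M.V2 (M.a v))
      exact toSpanSingleton_inj (fun h => hv (hMa_ker v h))
  -- U₂ = M.a U₁, giving an equivalence A : U₁ ≃ U₂
  have hmapa : Submodule.map M.a U₁ = U₂ := by
    have hle : Submodule.map M.a U₁ ≤ U₂ := by
      rintro _ ⟨x, hx, rfl⟩; exact hUa x hx
    refine Submodule.eq_of_le_of_finrank_le hle ?_
    rw [hd2, ← hd1]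
    exact le_of_eq (Submodule.equivMapOfInjective M.a hMa_inj U₁).finrank_eq
  have hres_bij : Function.Bijective (M.a.restrict hUa) := by
    constructor
    · intro x y h
      have h2 : M.a ↑x = M.a ↑y := congrArg Subtype.val h
      exact Subtype.ext (hMa_inj h2)
    · rintro ⟨y, hy⟩
      rw [← hmapa] at hy
      obtain ⟨x, hx, hxy⟩ := hy
      exact ⟨⟨x, hx⟩, Subtype.ext hxy⟩
  set A : ↥U₁ ≃ₗ[k] ↥U₂ := LinearEquiv.ofBijective (M.a.restrict hUa) hres_bij with hAdef
  have hA_apply : ∀ x : ↥U₁, (A x : M.V2) = M.a ↑x := fun _ => rfl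
  set B : ↥U₁ →ₗ[k] ↥U₁ := A.symm.toLinearMap.comp (M.b.restrict hUb) with hBdef
  set C : ↥U₁ →ₗ[k] ↥U₁ := A.symm.toLinearMap.comp (M.c.restrict hUc) with hCdef
  have hB_a : ∀ x : ↥U₁, M.a ↑(B x) = M.b ↑x := by
    intro x
    have h1 : A (B x) = (M.b.restrict hUb) x := A.apply_symm_apply _
    have h2 := congrArg Subtype.val h1
    rwa [hA_apply] at h2
  have hC_a : ∀ x : ↥U₁, M.a ↑(C x) = M.c ↑x := by
    intro x
    have h1 : A (C x) = (M.c.restrict hUc) x := A.apply_symm_apply _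
    have h2 := congrArg Subtype.val h1
    rwa [hA_apply] at h2
  -- membership facts
  have hmem_range2 : ∀ z : M.V2, π₂ z = 0 → z ∈ LinearMap.range ι₂ := by
    intro z h
    rw [← hexact2]; exact h
  have hmem_range1 : ∀ z : M.V1, π₁ z = 0 → z ∈ LinearMap.range ι₁ := by
    intro z h
    rw [← hexact1]; exact h
  have ha_pull : ∀ z : M.V1, M.a z ∈ LinearMap.range ι₂ → z ∈ LinearMap.range ι₁ := by
    intro z hz
    obtain ⟨u, hu⟩ := hz
    apply hmem_range1
    rw [← hπa z, ← hu]
    have h2 : ι₂ u ∈ LinearMap.ker π₂ := by rw [hexact2]; exact ⟨u, rfl⟩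
    exact h2
  have hB_mem : ∀ x : ↥U₁, ↑(B x) ∈ LinearMap.range ι₁ := by
    intro x
    apply ha_pull
    rw [hB_a x]
    exact hmem_range2 _ (hπb ↑x)
  have hC_mem : ∀ x : ↥U₁, ↑(C x) ∈ LinearMap.range ι₁ := by
    intro x
    apply ha_pull
    rw [hC_a x]
    exact hmem_range2 _ (hπc ↑x)
  -- the intersection with X^a and its preimage
  set W₁ : Submodule k M.V1 := U₁ ⊓ LinearMap.range ι₁ with hW₁def
  set V' : Submodule k (Fin a → Fin (N+1) → k) := Submodule.comap ι₁ W₁ with hV'def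
  have hW₁U : W₁ ≤ U₁ := inf_le_left
  have hW₁r : W₁ ≤ LinearMap.range ι₁ := inf_le_right
  have hmapV' : Submodule.map ι₁ V' = W₁ := by
    rw [hV'def]; exact (Submodule.map_comap_eq ι₁ W₁).trans (inf_eq_right.mpr hW₁r)
  have hrankV'W : Module.finrank k ↥V' = Module.finrank k ↥W₁ := by
    rw [← hmapV']
    exact LinearEquiv.finrank_eq (Submodule.equivMapOfInjective ι₁ hι1 _)
  -- identification of B, C with the X^a-structure maps on V'
  have hBV' : ∀ u : Fin a → Fin (N+1) → k, ∀ hu : ι₁ u ∈ U₁,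
      ι₁ ((kroneckerBeta k (N+1) l).compLeft (Fin a) u) = ↑(B ⟨ι₁ u, hu⟩) := by
    intro u hu
    apply hMa_inj
    rw [hB_a, hιa]
    exact (hιb u).symm
  have hCV' : ∀ u : Fin a → Fin (N+1) → k, ∀ hu : ι₁ u ∈ U₁,
      ι₁ ((kroneckerGamma k (N+1)).compLeft (Fin a) u) = ↑(C ⟨ι₁ u, hu⟩) := by
    intro u hu
    apply hMa_inj
    rw [hC_a, hιa]
    exact (hιc u).symm
  have hbV : ∀ u ∈ V', (kroneckerBeta k (N+1) l).compLeft (Fin a) u ∈ V' := by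
    intro u hu
    have hu' : ι₁ u ∈ W₁ := hu
    have hu1 : ι₁ u ∈ U₁ := hu'.1
    show ι₁ ((kroneckerBeta k (N+1) l).compLeft (Fin a) u) ∈ W₁
    rw [hBV' u hu1]
    exact ⟨(B ⟨ι₁ u, hu1⟩).2, hB_mem _⟩
  have hcV : ∀ u ∈ V', (kroneckerGamma k (N+1)).compLeft (Fin a) u ∈ V' := by
    intro u hu
    have hu' : ι₁ u ∈ W₁ := hu
    have hu1 : ι₁ u ∈ U₁ := hu'.1
    show ι₁ ((kroneckerGamma k (N+1)).compLeft (Fin a) u) ∈ W₁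
    rw [hCV' u hu1]
    exact ⟨(C ⟨ι₁ u, hu1⟩).2, hC_mem _⟩
  -- dimension bounds for W₁
  have hd1' : Module.finrank k ↥U₁ = N + 2 := hd1
  have hw1 : Module.finrank k ↥W₁ ≤ N + 2 := by
    rw [← hd1']
    exact Submodule.finrank_mono hW₁U
  set K₁ : Submodule k ↥U₁ := Submodule.comap U₁.subtype W₁ with hK₁def
  have hK₁rank : Module.finrank k ↥K₁ = Module.finrank k ↥W₁ :=
    (Submodule.comapSubtypeEquivOfLe hW₁U).finrank_eq
  have hBK : ∀ x : ↥U₁, B x ∈ K₁ := fun x =>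
    (Submodule.mem_comap.mpr ⟨(B x).2, hB_mem x⟩)
  have hCK : ∀ x : ↥U₁, C x ∈ K₁ := fun x =>
    (Submodule.mem_comap.mpr ⟨(C x).2, hC_mem x⟩)
  have hkerBC : ∀ x : ↥U₁, B x = 0 → C x = 0 → x = 0 := by
    intro x hb0 hc0
    have h1 : M.b ↑x = 0 := by
      rw [← hB_a x, hb0]
      show M.a ↑(0 : ↥U₁) = 0
      rw [ZeroMemClass.coe_zero, map_zero]
    have h2 : M.c ↑x = 0 := by
      rw [← hC_a x, hc0]
      show M.a ↑(0 : ↥U₁) = 0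
      rw [ZeroMemClass.coe_zero, map_zero]
    exact Subtype.ext (hbc ↑x h1 h2)
  have hw2 : N + 2 ≤ 2 * Module.finrank k ↥W₁ := by
    set D : ↥U₁ →ₗ[k] ↥K₁ × ↥K₁ :=
      (LinearMap.codRestrict K₁ B hBK).prod (LinearMap.codRestrict K₁ C hCK) with hDdef
    have hDinj : Function.Injective D := by
      intro x y hxy
      have hb' : B x = B y := congrArg Subtype.val (congrArg Prod.fst hxy)
      have hc' : C x = C y := congrArg Subtype.val (congrArg Prod.snd hxy)
      have h1 : B (x - y) = 0 := by rw [map_sub, hb', sub_self]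
      have h2 : C (x - y) = 0 := by rw [map_sub, hc', sub_self]
      have h3 := hkerBC _ h1 h2
      exact sub_eq_zero.mp h3
    have h4 : Module.finrank k ↥U₁ ≤ Module.finrank k (↥K₁ × ↥K₁) :=
      LinearMap.finrank_le_finrank_of_injective hDinj
    rw [Module.finrank_prod, hd1', hK₁rank] at h4
    omega
  -- apply the structure theorem for invariant subspaces
  obtain ⟨hrankV', v, hv_mem, hv_beta, hv_gamma, hv_indep, hv_span⟩ :=
    invariant_structure k N a hN l hinj V' hbV hcV
      (by rw [hrankV'W]; exact hw1) (by rw [hrankV'W]; exact hw2)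
  have hrankW₁ : Module.finrank k ↥W₁ = N + 1 := by rw [← hrankV'W]; exact hrankV'
  -- the embedding X → U
  set jlin : (Fin (N+1) → k) →ₗ[k] (Fin a → Fin (N+1) → k) :=
    ∑ i, LinearMap.smulRight (LinearMap.proj i) (v i) with hjlindef
  have hjlin_apply : ∀ e : Fin (N+1) → k, jlin e = ∑ i, e i • v i := by
    intro e
    rw [hjlindef, LinearMap.sum_apply]
    rfl
  have hjlin_mem : ∀ e, jlin e ∈ V' := by
    intro e
    rw [hjlin_apply]
    exact Submodule.sum_mem _ fun i _ => Submodule.smul_mem _ _ (hv_mem i)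
  have hjlin_inj : Function.Injective jlin := by
    intro e f h
    have h2 : ∑ i, (e - f) i • v i = 0 := by
      have h3 : ∀ i, (e - f) i • v i = e i • v i - f i • v i := by
        intro i; rw [Pi.sub_apply, sub_smul]
      rw [Finset.sum_congr rfl fun i _ => h3 i, Finset.sum_sub_distrib,
        ← hjlin_apply, ← hjlin_apply, h, sub_self]
    have h4 := hv_indep _ h2
    exact sub_eq_zero.mp h4
  have hjlin_range : LinearMap.range jlin = V' := by
    apply le_antisymm
    · rintro _ ⟨e, rfl⟩; exact hjlin_mem e
    · intro u hu
      obtain ⟨e, he⟩ := hv_span u hu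
      exact ⟨e, by rw [hjlin_apply]; exact he⟩
  have hιjmem1 : ∀ e, ι₁ (jlin e) ∈ U₁ := fun e => (hjlin_mem e : ι₁ (jlin e) ∈ W₁).1
  set j₁ : (Fin (N+1) → k) →ₗ[k] ↥U₁ := LinearMap.codRestrict U₁ (ι₁.comp jlin) hιjmem1
    with hj₁def
  have hιjmem2 : ∀ e, ι₂ (jlin e) ∈ U₂ := fun e => by
    rw [← hιa]; exact hUa _ (hιjmem1 e)
  set j₂ : (Fin (N+1) → k) →ₗ[k] ↥U₂ := LinearMap.codRestrict U₂ (ι₂.comp jlin) hιjmem2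
    with hj₂def
  have hj₁_coe : ∀ e, (j₁ e : M.V1) = ι₁ (jlin e) := fun _ => rfl
  have hj₂_coe : ∀ e, (j₂ e : M.V2) = ι₂ (jlin e) := fun _ => rfl
  have hj₁inj : Function.Injective j₁ := by
    intro e f h
    exact hjlin_inj (hι1 (by rw [← hj₁_coe, ← hj₁_coe, h]))
  have hj₂inj : Function.Injective j₂ := by
    intro e f h
    exact hjlin_inj (hι2 (by rw [← hj₂_coe, ← hj₂_coe, h]))
  have hAj : ∀ e, A (j₁ e) = j₂ e := by
    intro e
    apply Subtype.ext
    rw [hA_apply, hj₁_coe, hj₂_coe, hιa]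
  -- intertwining identities for j
  have hjlinβ : ∀ e, jlin (kroneckerBeta k (N+1) l e)
      = (kroneckerBeta k (N+1) l).compLeft (Fin a) (jlin e) := by
    intro e
    rw [hjlin_apply, hjlin_apply, map_sum]
    apply Finset.sum_congr rfl
    intro i _
    rw [map_smul, hv_beta i]
    show (l i * e i) • v i = e i • l i • v i
    rw [smul_smul, mul_comm]
  have hjlinγ : ∀ e, jlin (kroneckerGamma k (N+1) e)
      = (kroneckerGamma k (N+1)).compLeft (Fin a) (jlin e) := by
    intro e
    rw [hjlin_apply, hjlin_apply, map_sum]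
    have h1 : ∀ i, (kroneckerGamma k (N+1)).compLeft (Fin a) (e i • v i)
        = e i • v (finRotate (N+1) i) := by
      intro i; rw [map_smul, hv_gamma i]
    rw [Finset.sum_congr rfl fun i _ => h1 i]
    have h2 := Equiv.sum_comp (finRotate (N+1))
      (fun i => e ((finRotate (N+1)).symm i) • v i)
    simp only [Equiv.symm_apply_apply] at h2
    exact h2.symm
  have hhom1 : j₂.comp (repX k (N+1) l).a = (M.a.restrict hUa).comp j₁ := by
    apply LinearMap.ext; intro e
    apply Subtype.ext
    show ι₂ (jlin e) = M.a (ι₁ (jlin e))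
    rw [hιa]
  have hhom2 : j₂.comp (repX k (N+1) l).b = (M.b.restrict hUb).comp j₁ := by
    apply LinearMap.ext; intro e
    apply Subtype.ext
    show ι₂ (jlin (kroneckerBeta k (N+1) l e)) = M.b (ι₁ (jlin e))
    exact (congrArg ι₂ (hjlinβ e)).trans (hιb _).symm
  have hhom3 : j₂.comp (repX k (N+1) l).c = (M.c.restrict hUc).comp j₁ := by
    apply LinearMap.ext; intro e
    apply Subtype.ext
    show ι₂ (jlin (kroneckerGamma k (N+1) e)) = M.c (ι₁ (jlin e))
    exact (congrArg ι₂ (hjlinγ e)).trans (hιc _).symm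
  -- range of j₁ is K₁
  have hmapj₁ : Submodule.map U₁.subtype (LinearMap.range j₁) = W₁ := by
    rw [← LinearMap.range_comp, LinearMap.subtype_comp_codRestrict]
    erw [LinearMap.range_comp, hjlin_range, hmapV']
  have hrangej₁ : LinearMap.range j₁ = K₁ := by
    have h := congrArg (Submodule.comap U₁.subtype) hmapj₁
    rwa [Submodule.comap_map_eq_of_injective (Submodule.injective_subtype U₁)] at h
  -- construction of q₁, q₂
  have hrankQ : Module.finrank k (↥U₁ ⧸ K₁) = 1 := by
    have h := Submodule.finrank_quotient_add_finrank K₁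
    rw [hK₁rank, hrankW₁, hd1'] at h
    omega
  obtain ⟨qe⟩ : Nonempty ((↥U₁ ⧸ K₁) ≃ₗ[k] k) := by
    apply FiniteDimensional.nonempty_linearEquiv_of_finrank_eq
    rw [hrankQ, Module.finrank_self]
  set q₁ : ↥U₁ →ₗ[k] k := qe.toLinearMap.comp K₁.mkQ with hq₁def
  have hq₁surj : Function.Surjective q₁ := qe.surjective.comp (Submodule.mkQ_surjective K₁)
  have hkerq₁ : LinearMap.ker q₁ = K₁ := by
    rw [hq₁def, LinearMap.ker_comp, LinearEquiv.ker, Submodule.comap_bot, Submodule.ker_mkQ]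
  set q₂ : ↥U₂ →ₗ[k] k := q₁.comp A.symm.toLinearMap with hq₂def
  have hq₂surj : Function.Surjective q₂ := hq₁surj.comp A.symm.surjective
  have hkerq₂ : LinearMap.ker q₂ = LinearMap.range j₂ := by
    apply le_antisymm
    · intro y hy
      have h1 : A.symm y ∈ LinearMap.ker q₁ := hy
      rw [hkerq₁, ← hrangej₁] at h1
      obtain ⟨e, he⟩ := h1
      exact ⟨e, by rw [← hAj, he, A.apply_symm_apply]⟩
    · rintro _ ⟨e, rfl⟩
      show q₁ (A.symm (j₂ e)) = 0
      rw [← hAj, A.symm_apply_apply]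
      have h2 : j₁ e ∈ LinearMap.ker q₁ := by
        rw [hkerq₁, ← hrangej₁]; exact ⟨e, rfl⟩
      exact h2
  have hhom4 : q₂.comp (M.a.restrict hUa) = (repY k).a.comp q₁ := by
    apply LinearMap.ext; intro x
    show q₁ (A.symm (A x)) = q₁ x
    rw [A.symm_apply_apply]
  have hhom5 : q₂.comp (M.b.restrict hUb) = (repY k).b.comp q₁ := by
    apply LinearMap.ext; intro x
    show q₁ (B x) = (0 : k →ₗ[k] k) (q₁ x)
    have h1 : B x ∈ LinearMap.ker q₁ := by rw [hkerq₁]; exact hBK x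
    rw [LinearMap.zero_apply]
    exact h1
  have hhom6 : q₂.comp (M.c.restrict hUc) = (repY k).c.comp q₁ := by
    apply LinearMap.ext; intro x
    show q₁ (C x) = (0 : k →ₗ[k] k) (q₁ x)
    have h1 : C x ∈ LinearMap.ker q₁ := by rw [hkerq₁]; exact hCK x
    rw [LinearMap.zero_apply]
    exact h1
  have hkerq₁' : LinearMap.ker q₁ = LinearMap.range j₁ := by rw [hkerq₁, hrangej₁]
  -- key: an endomorphism of U vanishing on the X-part is zero
  have hres_eq : ∀ z : ↥U₁, (M.a.restrict hUa) z = A z := fun _ => rfl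
  have hAe : ∀ (e₁ : ↥U₁ →ₗ[k] ↥U₁) (e₂ : ↥U₂ →ₗ[k] ↥U₂),
      e₂.comp (M.a.restrict hUa) = (M.a.restrict hUa).comp e₁ →
      ∀ y, e₂ y = A (e₁ (A.symm y)) := by
    intro e₁ e₂ h y
    have h1 := LinearMap.congr_fun h (A.symm y)
    rw [LinearMap.comp_apply, LinearMap.comp_apply, hres_eq, hres_eq, A.apply_symm_apply] at h1
    exact h1
  have key : ∀ (e₁ : ↥U₁ →ₗ[k] ↥U₁) (e₂ : ↥U₂ →ₗ[k] ↥U₂),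
      e₂.comp (M.a.restrict hUa) = (M.a.restrict hUa).comp e₁ →
      e₂.comp (M.b.restrict hUb) = (M.b.restrict hUb).comp e₁ →
      e₂.comp (M.c.restrict hUc) = (M.c.restrict hUc).comp e₁ →
      e₁.comp j₁ = 0 → e₁ = 0 ∧ e₂ = 0 := by
    intro e₁ e₂ hea heb hec hej
    have he₂ : ∀ y, e₂ y = A (e₁ (A.symm y)) := hAe e₁ e₂ hea
    have hker : K₁ ≤ LinearMap.ker e₁ := by
      rw [← hrangej₁]
      rintro _ ⟨e, rfl⟩
      show e₁ (j₁ e) = 0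
      exact LinearMap.congr_fun hej e
    set g₁ : k →ₗ[k] ↥U₁ := (K₁.liftQ e₁ hker).comp qe.symm.toLinearMap with hg₁def
    have hg₁q : ∀ x, g₁ (q₁ x) = e₁ x := by
      intro x
      show (K₁.liftQ e₁ hker) (qe.symm (qe (K₁.mkQ x))) = e₁ x
      rw [qe.symm_apply_apply]
      exact Submodule.liftQ_apply K₁ e₁ x
    set g₂ : k →ₗ[k] ↥U₂ := A.toLinearMap.comp g₁ with hg₂def
    have hg₂q : ∀ y, g₂ (q₂ y) = e₂ y := by
      intro y
      show A (g₁ (q₁ (A.symm y))) = e₂ y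
      rw [hg₁q, ← he₂]
    by_cases hg0 : g₁ = 0
    · constructor
      · apply LinearMap.ext; intro x
        rw [← hg₁q x, hg0, LinearMap.zero_apply, LinearMap.zero_apply]
      · apply LinearMap.ext; intro y
        rw [he₂ y, ← hg₁q (A.symm y), hg0, LinearMap.zero_apply, LinearMap.zero_apply,
          map_zero]
    · exfalso
      apply hred
      set G₁ : k →ₗ[k] M.V1 := U₁.subtype.comp g₁ with hG₁def
      set G₂ : k →ₗ[k] M.V2 := U₂.subtype.comp g₂ with hG₂def
      have hG₂G₁ : ∀ t, G₂ t = M.a (G₁ t) := by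
        intro t
        show ↑(A (g₁ t)) = M.a ↑(g₁ t)
        rw [hA_apply]
      have hG₁b : ∀ t, M.b (G₁ t) = 0 := by
        intro t
        obtain ⟨x, rfl⟩ := hq₁surj t
        show M.b ↑(g₁ (q₁ x)) = 0
        have h1 : M.b ↑(g₁ (q₁ x)) = ↑((M.b.restrict hUb) (e₁ x)) := by rw [hg₁q]; rfl
        have h2 : (M.b.restrict hUb) (e₁ x) = e₂ ((M.b.restrict hUb) x) :=
          (LinearMap.congr_fun heb x).symm
        have h3 : e₂ ((M.b.restrict hUb) x) = g₂ (q₂ ((M.b.restrict hUb) x)) := (hg₂q _).symm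
        have h4 : q₂ ((M.b.restrict hUb) x) = 0 := by
          exact LinearMap.congr_fun hhom5 x
        rw [h1, h2, h3, h4, map_zero, ZeroMemClass.coe_zero]
      have hG₁c : ∀ t, M.c (G₁ t) = 0 := by
        intro t
        obtain ⟨x, rfl⟩ := hq₁surj t
        show M.c ↑(g₁ (q₁ x)) = 0
        have h1 : M.c ↑(g₁ (q₁ x)) = ↑((M.c.restrict hUc) (e₁ x)) := by rw [hg₁q]; rfl
        have h2 : (M.c.restrict hUc) (e₁ x) = e₂ ((M.c.restrict hUc) x) :=
          (LinearMap.congr_fun hec x).symm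
        have h3 : e₂ ((M.c.restrict hUc) x) = g₂ (q₂ ((M.c.restrict hUc) x)) := (hg₂q _).symm
        have h4 : q₂ ((M.c.restrict hUc) x) = 0 := by
          exact LinearMap.congr_fun hhom6 x
        rw [h1, h2, h3, h4, map_zero, ZeroMemClass.coe_zero]
      have hg₁1 : g₁ 1 ≠ 0 := by
        intro h1
        apply hg0
        apply LinearMap.ext; intro t
        have h2 : g₁ t = t • g₁ 1 := by
          rw [← map_smul, smul_eq_mul, mul_one]
        rw [h2, h1, smul_zero, LinearMap.zero_apply]
      have hG₁inj : Function.Injective G₁ := by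
        intro s t h
        have h1 : G₁ (s - t) = 0 := by rw [map_sub, h, sub_self]
        have h2 : g₁ (s - t) = 0 := Subtype.ext_iff.mpr h1
        have h3 : (s - t) • g₁ 1 = 0 := by
          rw [← map_smul, smul_eq_mul, mul_one, h2]
        rcases smul_eq_zero.mp h3 with h4 | h4
        · exact sub_eq_zero.mp h4
        · exact absurd h4 hg₁1
      refine ⟨G₁, G₂, ⟨?_, ?_, ?_⟩, hG₁inj, ?_⟩
      · apply LinearMap.ext; intro t
        show G₂ t = M.a (G₁ t)
        exact hG₂G₁ t
      · apply LinearMap.ext; intro t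
        show G₂ ((0 : k →ₗ[k] k) (@id k t)) = M.b (G₁ t)
        rw [LinearMap.zero_apply, map_zero]; exact (hG₁b t).symm
      · apply LinearMap.ext; intro t
        show G₂ ((0 : k →ₗ[k] k) (@id k t)) = M.c (G₁ t)
        rw [LinearMap.zero_apply, map_zero]; exact (hG₁c t).symm
      · intro s t h
        apply hG₁inj
        apply hMa_inj
        exact (hG₂G₁ s).symm.trans (h.trans (hG₂G₁ t))
  refine ⟨?_, j₁, j₂, q₁, q₂, hhom1, hhom2, hhom3, hhom4, hhom5, hhom6,
    hj₁inj, hj₂inj, hq₁surj, hq₂surj, hkerq₁', hkerq₂⟩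
  -- indecomposability
  intro e₁ e₂ hea heb hec hid1 hid2
  have he₂ : ∀ y, e₂ y = A (e₁ (A.symm y)) := hAe e₁ e₂ hea
  have he₂symm : ∀ w, A.symm (e₂ w) = e₁ (A.symm w) := by
    intro w
    rw [he₂ w, A.symm_apply_apply]
  have hBe : ∀ x, B (e₁ x) = e₁ (B x) := by
    intro x
    show A.symm ((M.b.restrict hUb) (e₁ x)) = e₁ (A.symm ((M.b.restrict hUb) x))
    have h1 : (M.b.restrict hUb) (e₁ x) = e₂ ((M.b.restrict hUb) x) :=
      (LinearMap.congr_fun heb x).symm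
    rw [h1, he₂symm]
  have hCe : ∀ x, C (e₁ x) = e₁ (C x) := by
    intro x
    show A.symm ((M.c.restrict hUc) (e₁ x)) = e₁ (A.symm ((M.c.restrict hUc) x))
    have h1 : (M.c.restrict hUc) (e₁ x) = e₂ ((M.c.restrict hUc) x) :=
      (LinearMap.congr_fun hec x).symm
    rw [h1, he₂symm]
  have hBj : ∀ e, B (j₁ e) = j₁ (kroneckerBeta k (N+1) l e) := by
    intro e
    show A.symm ((M.b.restrict hUb) (j₁ e)) = j₁ (kroneckerBeta k (N+1) l e)
    have h1 : (M.b.restrict hUb) (j₁ e) = j₂ (kroneckerBeta k (N+1) l e) :=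
      (LinearMap.congr_fun hhom2 e).symm
    rw [h1, ← hAj, A.symm_apply_apply]
  have hCj : ∀ e, C (j₁ e) = j₁ (kroneckerGamma k (N+1) e) := by
    intro e
    show A.symm ((M.c.restrict hUc) (j₁ e)) = j₁ (kroneckerGamma k (N+1) e)
    have h1 : (M.c.restrict hUc) (j₁ e) = j₂ (kroneckerGamma k (N+1) e) :=
      (LinearMap.congr_fun hhom3 e).symm
    rw [h1, ← hAj, A.symm_apply_apply]
  -- the composite X → U → U → Y is zero
  have hγsurj : Function.Surjective (kroneckerGamma k (N+1)) := by
    intro w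
    refine ⟨fun j => w (finRotate (N+1) j), ?_⟩
    funext i
    show w (finRotate (N+1) ((finRotate (N+1)).symm i)) = w i
    rw [Equiv.apply_symm_apply]
  have hphi2 : ∀ w, q₂ (e₂ (j₂ w)) = 0 := by
    intro w
    obtain ⟨e, rfl⟩ := hγsurj w
    have h1 : j₂ (kroneckerGamma k (N+1) e) = (M.c.restrict hUc) (j₁ e) :=
      LinearMap.congr_fun hhom3 e
    rw [h1]
    have h2 : e₂ ((M.c.restrict hUc) (j₁ e)) = (M.c.restrict hUc) (e₁ (j₁ e)) :=
      LinearMap.congr_fun hec (j₁ e)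
    rw [h2]
    exact LinearMap.congr_fun hhom6 (e₁ (j₁ e))
  have hphi1 : ∀ e, q₁ (e₁ (j₁ e)) = 0 := by
    intro e
    have h0 : ∀ z : ↥U₁, q₁ z = q₂ ((M.a.restrict hUa) z) := by
      intro z
      have h1 := LinearMap.congr_fun hhom4 z
      rw [LinearMap.comp_apply, LinearMap.comp_apply] at h1
      exact h1.symm
    rw [h0]
    have h2 : (M.a.restrict hUa) (e₁ (j₁ e)) = e₂ ((M.a.restrict hUa) (j₁ e)) :=
      (LinearMap.congr_fun hea (j₁ e)).symm
    rw [h2]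
    have h3 : (M.a.restrict hUa) (j₁ e) = j₂ e := by
      have h4 := LinearMap.congr_fun hhom1 e
      change j₂ ((repX k (N+1) l).a e) = (M.a.restrict hUa) (j₁ e) at h4
      exact h4.symm.trans (congrArg j₂ rfl)
    rw [h3]
    exact hphi2 e
  have hmem : ∀ e, e₁ (j₁ e) ∈ LinearMap.range j₁ := by
    intro e
    rw [← hkerq₁']
    exact hphi1 e
  -- the induced endomorphism f of X at vertex 1
  set jEq : (Fin (N+1) → k) ≃ₗ[k] ↥(LinearMap.range j₁) := LinearEquiv.ofInjective j₁ hj₁inj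
    with hjEqdef
  set f : (Fin (N+1) → k) →ₗ[k] (Fin (N+1) → k) :=
    jEq.symm.toLinearMap.comp
      (LinearMap.codRestrict (LinearMap.range j₁) (e₁.comp j₁) hmem) with hfdef
  have hjf : ∀ e, j₁ (f e) = e₁ (j₁ e) := by
    intro e
    have h1 : jEq (f e) = ⟨e₁ (j₁ e), hmem e⟩ := by
      show jEq (jEq.symm _) = _
      rw [jEq.apply_symm_apply]
      rfl
    have h2 := congrArg Subtype.val h1
    rwa [LinearEquiv.ofInjective_apply] at h2
  have hfβ : ∀ e, f (kroneckerBeta k (N+1) l e) = kroneckerBeta k (N+1) l (f e) := by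
    intro e
    apply hj₁inj
    calc j₁ (f (kroneckerBeta k (N+1) l e))
        = e₁ (j₁ (kroneckerBeta k (N+1) l e)) := hjf _
      _ = e₁ (B (j₁ e)) := by rw [hBj]
      _ = B (e₁ (j₁ e)) := (hBe _).symm
      _ = B (j₁ (f e)) := by rw [hjf]
      _ = j₁ (kroneckerBeta k (N+1) l (f e)) := hBj (f e)
  have hfγ : ∀ e, f (kroneckerGamma k (N+1) e) = kroneckerGamma k (N+1) (f e) := by
    intro e
    apply hj₁inj
    calc j₁ (f (kroneckerGamma k (N+1) e))
        = e₁ (j₁ (kroneckerGamma k (N+1) e)) := hjf _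
      _ = e₁ (C (j₁ e)) := by rw [hCj]
      _ = C (e₁ (j₁ e)) := (hCe _).symm
      _ = C (j₁ (f e)) := by rw [hjf]
      _ = j₁ (kroneckerGamma k (N+1) (f e)) := hCj (f e)
  -- f is scalar
  set sing : Fin (N+1) → (Fin (N+1) → k) := fun i => Pi.single i (1:k) with hsingdef
  have hsing_same : ∀ i, sing i i = 1 := by
    intro i
    show Pi.single (M := fun _ : Fin (N+1) => k) i 1 i = 1
    exact Pi.single_eq_same i 1
  have hsing_ne : ∀ i j, j ≠ i → sing i j = 0 := by
    intro i j hj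
    show Pi.single (M := fun _ : Fin (N+1) => k) i 1 j = 0
    exact Pi.single_eq_of_ne hj 1
  have hβ_apply : ∀ (w : Fin (N+1) → k) j, kroneckerBeta k (N+1) l w j = l j * w j :=
    fun _ _ => rfl
  have hγ_apply : ∀ (w : Fin (N+1) → k) j,
      kroneckerGamma k (N+1) w j = w ((finRotate (N+1)).symm j) := fun _ _ => rfl
  have hsingleβ : ∀ i, kroneckerBeta k (N+1) l (sing i) = l i • sing i := by
    intro i
    funext j
    rw [hβ_apply]
    show l j * sing i j = l i * sing i j
    by_cases h : j = i
    · subst h; rfl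
    · rw [hsing_ne i j h, mul_zero, mul_zero]
  have hsingleγ : ∀ i, kroneckerGamma k (N+1) (sing i) = sing (finRotate (N+1) i) := by
    intro i
    funext j
    rw [hγ_apply]
    by_cases h : j = finRotate (N+1) i
    · subst h
      rw [Equiv.symm_apply_apply, hsing_same, hsing_same]
    · rw [hsing_ne _ _ h, hsing_ne]
      intro hc
      exact h (by rw [← (Equiv.symm_apply_eq _).mp hc])
  have hdiag : ∀ i j, j ≠ i → f (sing i) j = 0 := by
    intro i j hj
    have h1 : l i • f (sing i) = kroneckerBeta k (N+1) l (f (sing i)) := by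
      rw [← map_smul, ← hsingleβ i, hfβ]
    have h2 := congrFun h1 j
    rw [hβ_apply] at h2
    have h2' : l i * f (sing i) j = l j * f (sing i) j := h2
    have h3 : (l i - l j) * f (sing i) j = 0 := by
      rw [sub_mul, h2', sub_self]
    rcases mul_eq_zero.mp h3 with h4 | h4
    · exact absurd (hinj (sub_eq_zero.mp h4)) (fun h5 => hj (h5.symm))
    · exact h4
  set μ : Fin (N+1) → k := fun i => f (sing i) i with hμdef
  have hfsingle : ∀ i, f (sing i) = μ i • sing i := by
    intro i
    funext j
    show f (sing i) j = μ i * sing i j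
    by_cases h : j = i
    · subst h
      rw [hsing_same, mul_one]
    · rw [hdiag i j h, hsing_ne i j h, mul_zero]
  have hμrot : ∀ i, μ (finRotate (N+1) i) = μ i := by
    intro i
    have h1 : f (sing (finRotate (N+1) i)) = μ i • sing (finRotate (N+1) i) := by
      rw [← hsingleγ, hfγ, hfsingle i, map_smul, hsingleγ]
    have h2 := congrFun h1 (finRotate (N+1) i)
    have h3 : (μ i • sing (finRotate (N+1) i)) (finRotate (N+1) i) = μ i := by
      show μ i * sing (finRotate (N+1) i) (finRotate (N+1) i) = μ i
      rw [hsing_same, mul_one]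
    rw [h3] at h2
    exact h2
  have hμconst : ∀ i, μ i = μ 0 := const_of_finRotate N μ hμrot
  have hfval : ∀ e, f e = μ 0 • e := by
    intro e
    have h1 : e = ∑ i, Pi.single i (e i) := (Finset.univ_sum_single e).symm
    have h2 : ∀ i : Fin (N+1), Pi.single i (e i) = e i • sing i := by
      intro i
      have h3 : e i • (1:k) = e i := by rw [smul_eq_mul, mul_one]
      show Pi.single i (e i) = e i • Pi.single (M := fun _ : Fin (N+1) => k) i 1
      rw [← Pi.single_smul, h3]
    calc f e = f (∑ i, Pi.single i (e i)) := by rw [← h1]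
      _ = ∑ i, f (Pi.single i (e i)) := map_sum f _ _
      _ = ∑ i, e i • (μ 0 • sing i) := by
          apply Finset.sum_congr rfl
          intro i _
          rw [h2 i, map_smul, hfsingle i, hμconst i]
      _ = μ 0 • ∑ i, Pi.single i (e i) := by
          rw [Finset.smul_sum]
          apply Finset.sum_congr rfl
          intro i _
          rw [smul_comm, h2 i]
      _ = μ 0 • e := by rw [← h1]
  -- μ 0 is idempotent
  have hff : ∀ e, f (f e) = f e := by
    intro e
    apply hj₁inj
    rw [hjf, hjf]
    exact LinearMap.congr_fun hid1 (j₁ e)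
  have hμ2 : μ 0 * μ 0 = μ 0 := by
    have h1 := hff (sing 0)
    rw [hfval, hfval] at h1
    have h2 := congrFun h1 0
    have h3 : (μ 0 • (μ 0 • sing (0 : Fin (N+1)))) 0 = μ 0 * μ 0 := by
      show μ 0 * (μ 0 * sing (0 : Fin (N+1)) 0) = μ 0 * μ 0
      rw [hsing_same, mul_one]
    have h4 : (μ 0 • sing (0 : Fin (N+1))) 0 = μ 0 := by
      show μ 0 * sing (0 : Fin (N+1)) 0 = μ 0
      rw [hsing_same, mul_one]
    rw [h3, h4] at h2
    exact h2
  have hμcases : μ 0 = 0 ∨ μ 0 = 1 := by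
    rcases mul_eq_zero.mp (show μ 0 * (μ 0 - 1) = 0 by ring_nf; linear_combination hμ2) with h | h
    · exact Or.inl h
    · exact Or.inr (by linear_combination h)
  rcases hμcases with hμ0 | hμ1
  · left
    apply key e₁ e₂ hea heb hec
    apply LinearMap.ext; intro e
    rw [LinearMap.comp_apply, LinearMap.zero_apply, ← hjf, hfval, hμ0, zero_smul, map_zero]
  · right
    have h1 : (LinearMap.id - e₁).comp j₁ = 0 := by
      apply LinearMap.ext; intro e
      rw [LinearMap.comp_apply, LinearMap.zero_apply, LinearMap.sub_apply, LinearMap.id_apply,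
        ← hjf, hfval, hμ1, one_smul, sub_self]
    have h2 : (LinearMap.id - e₂).comp (M.a.restrict hUa)
        = (M.a.restrict hUa).comp (LinearMap.id - e₁) := by
      rw [LinearMap.sub_comp, LinearMap.comp_sub, LinearMap.id_comp, LinearMap.comp_id, hea]
    have h3 : (LinearMap.id - e₂).comp (M.b.restrict hUb)
        = (M.b.restrict hUb).comp (LinearMap.id - e₁) := by
      rw [LinearMap.sub_comp, LinearMap.comp_sub, LinearMap.id_comp, LinearMap.comp_id, heb]
    have h4 : (LinearMap.id - e₂).comp (M.c.restrict hUc)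
        = (M.c.restrict hUc).comp (LinearMap.id - e₁) := by
      rw [LinearMap.sub_comp, LinearMap.comp_sub, LinearMap.id_comp, LinearMap.comp_id, hec]
    obtain ⟨h5, h6⟩ := key _ _ h2 h3 h4 h1
    constructor
    · have := sub_eq_zero.mp h5
      exact this.symm
    · have := sub_eq_zero.mp h6
      exact this.symm
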